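/- Let ρ be a Radon probability measure on Ω × Ω with both marginals equal to probability measures μ and ν, and let 𝒢 be a convex cone of Borel measurable functions. Suppose that for all g ∈ 𝒢 and all bounded Borel measurable functions h: Ω → ℝ, ∫ h(ω₁) g(ω₁) dρ(ω₁,ω₂) = ∫ h(ω₁) g(ω₂) dρ(ω₁,ω₂) (all integrals finite). Then for all f that are finite maxima of elements of 𝒢 and all bounded Borel measurable non-negative h, ∫ h(ω₁) f(ω₁) dρ ≤ ∫ h(ω₁) f(ω₂) dρ. -/

import Mathlib

open MeasureTheory

variable {Ω : Type*}

/-- A convex cone of real-valued functions on `Ω`. -/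
def IsConvexConeR (𝒢 : Set (Ω → ℝ)) : Prop :=
  ∀ f ∈ 𝒢, ∀ g ∈ 𝒢, ∀ a b : ℝ, 0 ≤ a → 0 ≤ b →
    (fun ω => a * f ω + b * g ω) ∈ 𝒢

/-- If a coupling `ρ` with marginals `μ, ν` satisfies the martingale-type identity
`∫ h(ω₁) g(ω₁) dρ = ∫ h(ω₁) g(ω₂) dρ` for all generators `g ∈ 𝒢` and all bounded
measurable `h`, then the submartingale inequality holds for all finite maxima of
generators and all bounded measurable non-negative `h`. -/
theorem submartingale_of_martingale_identity [MeasurableSpace Ω]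
    (ρ : Measure (Ω × Ω)) [IsProbabilityMeasure ρ]
    (μ ν : Measure Ω) [IsProbabilityMeasure μ] [IsProbabilityMeasure ν]
    (hμ : ρ.map Prod.fst = μ) (hν : ρ.map Prod.snd = ν)
    (𝒢 : Set (Ω → ℝ)) (hcone : IsConvexConeR 𝒢) (hmeas : ∀ g ∈ 𝒢, Measurable g)
    (hint : ∀ g ∈ 𝒢, Integrable (fun q : Ω × Ω => g q.1) ρ ∧
      Integrable (fun q : Ω × Ω => g q.2) ρ)
    (heq : ∀ g ∈ 𝒢, ∀ h : Ω → ℝ, Measurable h → (∃ M, ∀ ω, |h ω| ≤ M) →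
      ∫ q, h q.1 * g q.1 ∂ρ = ∫ q, h q.1 * g q.2 ∂ρ) :
    ∀ (n : ℕ) (g : Fin (n + 1) → Ω → ℝ), (∀ i, g i ∈ 𝒢) →
      ∀ h : Ω → ℝ, Measurable h → (∃ M, ∀ ω, |h ω| ≤ M) → (∀ ω, 0 ≤ h ω) →
        ∫ q, h q.1 * (Finset.univ.sup' Finset.univ_nonempty fun i => g i q.1) ∂ρ ≤
          ∫ q, h q.1 * (Finset.univ.sup' Finset.univ_nonempty fun i => g i q.2) ∂ρ := by
  intro n g hg h hhm hbd hhnn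
  obtain ⟨M, hM⟩ := hbd
  set f : Ω → ℝ := fun ω => Finset.univ.sup' Finset.univ_nonempty fun i => g i ω with hfdef
  -- measurability of f
  have hfm : Measurable f := by
    have : f = Finset.univ.sup' Finset.univ_nonempty g := by
      funext ω; rw [Finset.sup'_apply]
    rw [this]
    exact Finset.measurable_sup' _ fun i _ => hmeas (g i) (hg i)
  have hgle : ∀ i ω, g i ω ≤ f ω := fun i ω =>
    Finset.le_sup' (f := fun i => g i ω) (Finset.mem_univ i)
  have hattain : ∀ ω, ∃ i, g i ω = f ω := by
    intro ω
    obtain ⟨i, _, hi⟩ := Finset.exists_mem_eq_sup' Finset.univ_nonempty (fun i => g i ω)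
    exact ⟨i, hi.symm⟩
  -- the partition
  set A : Fin (n + 1) → Set Ω := fun i =>
    {ω | g i ω = f ω} ∩ ⋂ (j : Fin (n + 1)) (_ : j < i), {ω | g j ω = f ω}ᶜ with hAdef
  have hmemA : ∀ i ω, ω ∈ A i ↔ (g i ω = f ω ∧ ∀ j, j < i → g j ω ≠ f ω) := by
    intro i ω
    simp [hAdef, Set.mem_iInter]
  have hAm : ∀ i, MeasurableSet (A i) := by
    intro i
    apply MeasurableSet.inter
    · exact measurableSet_eq_fun (hmeas (g i) (hg i)) hfm
    · exact MeasurableSet.iInter fun j => MeasurableSet.iInter fun _ =>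
        (measurableSet_eq_fun (hmeas (g j) (hg j)) hfm).compl
  -- unique membership
  have hunique : ∀ ω, ∃! i, ω ∈ A i := by
    intro ω
    have hs : (Finset.univ.filter fun i => g i ω = f ω).Nonempty := by
      obtain ⟨i, hi⟩ := hattain ω
      exact ⟨i, by simp [hi]⟩
    set i₀ := (Finset.univ.filter fun i => g i ω = f ω).min' hs with hi₀def
    have hi₀mem : g i₀ ω = f ω := by
      have := Finset.min'_mem _ hs
      simpa using this
    refine ⟨i₀, ?_, ?_⟩
    · show ω ∈ A i₀
      rw [hmemA]
      refine ⟨hi₀mem, fun j hj hje => ?_⟩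
      have : i₀ ≤ j := Finset.min'_le _ _ (by simp [hje])
      exact absurd hj (not_lt.mpr this)
    · intro i hi
      rw [hmemA] at hi
      by_contra hne
      rcases lt_or_gt_of_ne hne with hlt | hlt
      · have hile : i₀ ≤ i := Finset.min'_le _ _ (by simp [hi.1])
        exact absurd hlt (not_lt.mpr hile)
      · exact hi.2 i₀ hlt hi₀mem
  have hsum : ∀ ω, ∑ i, (A i).indicator h ω = h ω := by
    intro ω
    obtain ⟨i₀, hi₀, huq⟩ := hunique ω
    rw [Finset.sum_eq_single i₀]
    · exact Set.indicator_of_mem hi₀ h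
    · intro j _ hj
      apply Set.indicator_of_notMem
      exact fun hmem => hj (huq j hmem)
    · intro hj; exact absurd (Finset.mem_univ i₀) hj
  -- integrability of f in each coordinate
  have habs : ∀ ω, |f ω| ≤ ∑ i, |g i ω| := by
    intro ω
    obtain ⟨i, hi⟩ := hattain ω
    rw [← hi]
    exact Finset.single_le_sum (f := fun i => |g i ω|) (fun j _ => abs_nonneg _)
      (Finset.mem_univ i)
  have hintf1 : Integrable (fun q : Ω × Ω => f q.1) ρ := by
    apply Integrable.mono' (g := fun q : Ω × Ω => ∑ i, |g i q.1|)
    · exact integrable_finset_sum _ fun i _ => ((hint (g i) (hg i)).1).abs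
    · exact (hfm.comp measurable_fst).aestronglyMeasurable
    · exact Filter.Eventually.of_forall fun q => by
        simpa [Real.norm_eq_abs] using habs q.1
  have hintf2 : Integrable (fun q : Ω × Ω => f q.2) ρ := by
    apply Integrable.mono' (g := fun q : Ω × Ω => ∑ i, |g i q.2|)
    · exact integrable_finset_sum _ fun i _ => ((hint (g i) (hg i)).2).abs
    · exact (hfm.comp measurable_snd).aestronglyMeasurable
    · exact Filter.Eventually.of_forall fun q => by
        simpa [Real.norm_eq_abs] using habs q.2
  -- generic integrability of h'(ω₁) * φ(q) for bounded measurable h'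
  have hbm : ∀ (h' : Ω → ℝ), Measurable h' → (∀ ω, |h' ω| ≤ M) →
      ∀ (φ : Ω × Ω → ℝ), Integrable φ ρ → Integrable (fun q => h' q.1 * φ q) ρ := by
    intro h' hm' hb' φ hφ
    exact hφ.bdd_mul ((hm'.comp measurable_fst).aestronglyMeasurable)
      (c := M) (Filter.Eventually.of_forall fun q => by simpa [Real.norm_eq_abs] using hb' q.1)
  -- the indicator functions
  set h' : Fin (n + 1) → Ω → ℝ := fun i => (A i).indicator h with hh'def
  have hh'm : ∀ i, Measurable (h' i) := fun i => hhm.indicator (hAm i)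
  have hh'b : ∀ i ω, |h' i ω| ≤ M := by
    intro i ω
    simp only [hh'def]
    rcases Set.indicator_eq_zero_or_self (A i) h ω with he | he <;> rw [he]
    · simpa using le_trans (abs_nonneg (h ω)) (hM ω)
    · exact hM ω
  have hh'nn : ∀ i ω, 0 ≤ h' i ω := fun i ω => Set.indicator_nonneg (fun x _ => hhnn x) ω
  -- decompose the LHS
  have hLHS : ∫ q, h q.1 * f q.1 ∂ρ = ∑ i, ∫ q, h' i q.1 * g i q.1 ∂ρ := by
    have : (fun q : Ω × Ω => h q.1 * f q.1) = fun q => ∑ i, h' i q.1 * g i q.1 := by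
      funext q
      rw [← hsum q.1, Finset.sum_mul]
      apply Finset.sum_congr rfl
      intro i _
      by_cases hq : q.1 ∈ A i
      · rw [(hmemA i q.1).mp hq |>.1]
      · rw [hh'def]; simp [Set.indicator_of_notMem hq]
    rw [this]
    exact integral_finset_sum _ fun i _ =>
      hbm (h' i) (hh'm i) (hh'b i) _ (hint (g i) (hg i)).1
  have hRHS : ∫ q, h q.1 * f q.2 ∂ρ = ∑ i, ∫ q, h' i q.1 * f q.2 ∂ρ := by
    have : (fun q : Ω × Ω => h q.1 * f q.2) = fun q => ∑ i, h' i q.1 * f q.2 := by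
      funext q
      rw [← hsum q.1, Finset.sum_mul]
    rw [this]
    exact integral_finset_sum _ fun i _ => hbm (h' i) (hh'm i) (hh'b i) _ hintf2
  calc ∫ q, h q.1 * f q.1 ∂ρ = ∑ i, ∫ q, h' i q.1 * g i q.1 ∂ρ := hLHS
    _ = ∑ i, ∫ q, h' i q.1 * g i q.2 ∂ρ := by
        apply Finset.sum_congr rfl
        intro i _
        exact heq (g i) (hg i) (h' i) (hh'm i) ⟨M, hh'b i⟩
    _ ≤ ∑ i, ∫ q, h' i q.1 * f q.2 ∂ρ := by
        apply Finset.sum_le_sum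
        intro i _
        apply integral_mono (hbm (h' i) (hh'm i) (hh'b i) _ (hint (g i) (hg i)).2)
          (hbm (h' i) (hh'm i) (hh'b i) _ hintf2)
        intro q
        exact mul_le_mul_of_nonneg_left (hgle i q.2) (hh'nn i q.1)
    _ = ∫ q, h q.1 * f q.2 ∂ρ := hRHS.symm
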